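/- Let {γ_Λ}_{Λ∈𝒮} be a specification on (Ω,𝓕). Then for each finite Λ ⊆ ℤ^d, each finite Γ ⊆ ℤ^d∖Λ, and all bounded measurable functions f, g on Ω: γ_{Λ∪Γ}[f · γ_Λ(γ_Γ(g))] = γ_{Λ∪Γ}[g · γ_Γ(γ_Λ(f))]. -/

import Mathlib

open MeasureTheory ProbabilityTheory
open scoped ENNReal NNReal

namespace GibbsSingleton

/-- Configuration space `E^ι`. -/
abbrev Config (ι E : Type*) := ι → E

variable {ι E : Type*}

/-- The configuration equal to `σ` on `Λ` and to `ω` off `Λ`. -/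
def subst [DecidableEq ι] (Λ : Finset ι) (σ : {x // x ∈ Λ} → E) (ω : Config ι E) :
    Config ι E := fun i => if h : i ∈ Λ then σ ⟨i, h⟩ else ω i

variable [MeasurableSpace E]

/-- The free kernel `λ_Λ` applied to an `ℝ≥0∞`-valued function:
`λ_Λ(h ∣ ω) = ∫ h(σ_Λ ω) λ^Λ(dσ_Λ)`. -/
noncomputable def freeF [DecidableEq ι] (lam : ι → Measure E) (Λ : Finset ι)
    (h : Config ι E → ℝ≥0∞) (ω : Config ι E) : ℝ≥0∞ :=
  ∫⁻ σ : {x // x ∈ Λ} → E, h (subst Λ σ ω) ∂(Measure.pi fun i : {x // x ∈ Λ} => lam i.1)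

/-- The function `ρ_i ρ_j⁻¹`, `ℝ≥0∞`-valued. -/
noncomputable def rat (ρ : ι → Config ι E → ℝ≥0) (i j : ι) (η : Config ι E) : ℝ≥0∞ :=
  (ρ i η : ℝ≥0∞) / (ρ j η : ℝ≥0∞)

/-- The set `b(j,V,ω)` of good configurations at site `j` given `ω` outside `V ∪ {j}`. -/
noncomputable def bSet [DecidableEq ι] (lam : ι → Measure E) (ρ : ι → Config ι E → ℝ≥0)
    (j : ι) (V : Finset ι) (ω : Config ι E) : Set E :=
  {x | (∀ σ : {y // y ∈ V} → E, 0 < ρ j (subst V σ (Function.update ω j x))) ∧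
    ∀ i, i ≠ j →
      0 < (⨅ σ : {y // y ∈ V} → E,
          freeF lam {i} (rat ρ i j) (subst V σ (Function.update ω j x))) ∧
      (⨆ σ : {y // y ∈ V} → E,
          freeF lam {i} (rat ρ i j) (subst V σ (Function.update ω j x))) < ⊤}

/-- The multi-site good set `b(V,W,ω)`. -/
noncomputable def bSetF [DecidableEq ι] (lam : ι → Measure E) (ρ : ι → Config ι E → ℝ≥0)
    (V W : Finset ι) (ω : Config ι E) : Set ({x // x ∈ V} → E) :=
  {xV | ∀ k : {x // x ∈ V}, xV k ∈ bSet lam ρ k.1 ((V.erase k.1) ∪ W) ω}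

/-- The set `B(j,V) = {ω : ω_j ∈ b(j,V,ω)}`. -/
noncomputable def BSet [DecidableEq ι] (lam : ι → Measure E) (ρ : ι → Config ι E → ℝ≥0)
    (j : ι) (V : Finset ι) : Set (Config ι E) :=
  {ω | ω j ∈ bSet lam ρ j V ω}

/-- Hypothesis (H1): every good set `b(j,V,ω)` is nonempty. -/
def H1 [DecidableEq ι] (lam : ι → Measure E) (ρ : ι → Config ι E → ℝ≥0) : Prop :=
  ∀ (ω : Config ι E) (j : ι) (V : Finset ι), j ∉ V → (bSet lam ρ j V ω).Nonempty

/-- The order-consistency identity appearing in hypothesis (H2), with the convention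
`1/∞ = 0` built into `ℝ≥0∞` division. -/
def H2id [DecidableEq ι] (lam : ι → Measure E) (ρ : ι → Config ι E → ℝ≥0)
    (i j : ι) (ω : Config ι E) : Prop :=
  ∀ xi ∈ bSet lam ρ i {j} ω, ∀ xj ∈ bSet lam ρ j {i} ω,
    ((ρ i ω : ℝ≥0∞) * (ρ j (Function.update ω i xi) : ℝ≥0∞)) /
      ((ρ i (Function.update ω i xi) : ℝ≥0∞) *
        freeF lam {j} (rat ρ j i) (Function.update ω i xi))
    = ((ρ j ω : ℝ≥0∞) * (ρ i (Function.update ω j xj) : ℝ≥0∞)) /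
      ((ρ j (Function.update ω j xj) : ℝ≥0∞) *
        freeF lam {i} (rat ρ i j) (Function.update ω j xj))

/-- Hypothesis (H2). -/
def H2 [DecidableEq ι] (lam : ι → Measure E) (ρ : ι → Config ι E → ℝ≥0) : Prop :=
  ∀ i j, i ≠ j → ∀ ω : Config ι E, H2id lam ρ i j ω

/-- `R_Θ^Γ` evaluated using the choice `x_Θ`:
`((ρ_Θ/ρ_Γ) ⬝ λ_Γ(ρ_Γ ρ_Θ⁻¹))(x_Θ ω)`. -/
noncomputable def Rexpr [DecidableEq ι] (lam : ι → Measure E)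
    (ρF : Finset ι → Config ι E → ℝ≥0) (Θ Γ : Finset ι) (x : {y // y ∈ Θ} → E)
    (ω : Config ι E) : ℝ≥0∞ :=
  ((ρF Θ (subst Θ x ω) : ℝ≥0∞) / (ρF Γ (subst Θ x ω) : ℝ≥0∞)) *
    freeF lam Γ (fun η => (ρF Γ η : ℝ≥0∞) / (ρF Θ η : ℝ≥0∞)) (subst Θ x ω)

/-- The family `ρ_Λ` is obtained from the singletons `ρ_i` by the recursive construction
`ρ_{Λ∪{i}} = ρ_Λ / R_Λ^i`, `R_Λ^i(ω) = ((ρ_Λ/ρ_i) ⬝ λ_i(ρ_i ρ_Λ⁻¹))(x_Λ ω)`,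
`x_Λ ∈ b(Λ,{i},ω)` (the value being independent of this choice). -/
def IsRec [DecidableEq ι] (lam : ι → Measure E) (ρ : ι → Config ι E → ℝ≥0)
    (ρF : Finset ι → Config ι E → ℝ≥0) : Prop :=
  (∀ ω, ρF ∅ ω = 1) ∧ (∀ i, ρF {i} = ρ i) ∧ (∀ Λ, Measurable (ρF Λ)) ∧
  ∀ (Λ : Finset ι) (i : ι), i ∉ Λ → ∀ ω : Config ι E,
    (∀ x ∈ bSetF lam ρ Λ {i} ω, ∀ x' ∈ bSetF lam ρ Λ {i} ω,
      Rexpr lam ρF Λ {i} x ω = Rexpr lam ρF Λ {i} x' ω) ∧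
    ∀ x ∈ bSetF lam ρ Λ {i} ω,
      (ρF (insert i Λ) ω : ℝ≥0∞) = (ρF Λ ω : ℝ≥0∞) / Rexpr lam ρF Λ {i} x ω

/-- The sub-σ-algebra `𝓕_U` of events generated by the coordinates in `U`. -/
def cylSigma (E : Type*) [MeasurableSpace E] {ι : Type*} (U : Set ι) :
    MeasurableSpace (Config ι E) :=
  MeasurableSpace.comap (fun ω (i : U) => ω i.1) MeasurableSpace.pi

/-- A specification: a family of probability kernels, measurable w.r.t. the outside
σ-algebra, proper, and consistent. -/
def IsSpecification (γ : Finset ι → Kernel (Config ι E) (Config ι E)) : Prop :=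
  (∀ Λ, IsMarkovKernel (γ Λ)) ∧
  (∀ (Λ : Finset ι) (A : Set (Config ι E)), MeasurableSet A →
    Measurable[cylSigma E ((Λ : Set ι)ᶜ)] fun ω => γ Λ ω A) ∧
  (∀ (Λ : Finset ι) (B : Set (Config ι E)), MeasurableSet[cylSigma E ((Λ : Set ι)ᶜ)] B →
    ∀ ω, γ Λ ω B = B.indicator (fun _ => (1 : ℝ≥0∞)) ω) ∧
  (∀ Λ Δ : Finset ι, Λ ⊆ Δ → (γ Λ).comp (γ Δ) = γ Δ)

/-- The kernel family `γ` is `{ρ_Λ λ_Λ}`. -/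
def MatchesDensity [DecidableEq ι] (lam : ι → Measure E)
    (γ : Finset ι → Kernel (Config ι E) (Config ι E))
    (ρF : Finset ι → Config ι E → ℝ≥0) : Prop :=
  ∀ (Λ : Finset ι) (ω : Config ι E) (A : Set (Config ι E)), MeasurableSet A →
    γ Λ ω A = freeF lam Λ (fun η => (ρF Λ η : ℝ≥0∞) * A.indicator (fun _ => 1) η) ω

end GibbsSingleton

open GibbsSingleton MeasureTheory ProbabilityTheory

section Aux

/-- Pull-out property for a measure that is "Dirac" on a sub-σ-algebra `m`. -/
lemma lintegral_mul_pullout {α : Type*} {m : MeasurableSpace α}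
    [m0 : MeasurableSpace α] (hm : m ≤ m0)
    (μ : Measure α) (ω : α)
    (hμ : ∀ B : Set α, MeasurableSet[m] B → μ B = B.indicator (fun _ => (1 : ℝ≥0∞)) ω)
    {u : α → ℝ≥0∞} (hu : Measurable[m] u) {h : α → ℝ≥0∞} (hh : Measurable h) :
    ∫⁻ x, u x * h x ∂μ = u ω * ∫⁻ x, h x ∂μ := by
  revert u
  refine @Measurable.ennreal_induction α m
    (fun u => ∫⁻ x, u x * h x ∂μ = u ω * ∫⁻ x, h x ∂μ) ?_ ?_ ?_
  · intro c s hs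
    have hs0 : MeasurableSet[m0] s := hm s hs
    have step1 : ∫⁻ x, s.indicator (fun _ => c) x * h x ∂μ
        = c * ∫⁻ x in s, h x ∂μ := by
      have : ∀ x, s.indicator (fun _ => c) x * h x
          = s.indicator (fun x => c * h x) x := by
        intro x
        by_cases hx : x ∈ s <;> simp [Set.indicator, hx]
      simp only [this]
      rw [lintegral_indicator hs0, lintegral_const_mul _ hh]
    rw [step1]
    by_cases hω : ω ∈ s
    · have hcompl : μ sᶜ = 0 := by
        rw [hμ sᶜ hs.compl]; simp [hω]
      have : μ.restrict s = μ :=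
        Measure.restrict_eq_self_of_ae_mem (by
          rw [MeasureTheory.ae_iff]
          exact hcompl)
      rw [this]
      simp [Set.indicator, hω]
    · have hzero : μ s = 0 := by
        rw [hμ s hs]; simp [hω]
      rw [Measure.restrict_eq_zero.2 hzero]
      simp [Set.indicator, hω]
  · intro u v _ hum hvm hu hv
    have hum0 : Measurable[m0] u := hum.mono hm le_rfl
    have heq : ∀ x, (u + v) x * h x = u x * h x + v x * h x := by
      intro x; simp [add_mul]
    simp only [heq]
    rw [lintegral_add_left (f := fun x => u x * h x) (hum0.mul hh), hu, hv]
    simp [add_mul]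
  · intro u hum humono hu
    have hum0 : ∀ n, Measurable[m0] (u n) := fun n => (hum n).mono hm le_rfl
    simp only [iSup_apply, ENNReal.iSup_mul]
    rw [lintegral_iSup (f := fun n x => u n x * h x) (fun n => (hum0 n).mul hh)
      (fun i j hij x => mul_le_mul_left (humono hij x) _)]
    exact iSup_congr hu

/-- Measurability of `ω ↦ ∫⁻ f ∂(κ ω)` with respect to a sub-σ-algebra `m`,
given `m`-measurability of `ω ↦ κ ω A`. -/
lemma measurable_lintegral_kernel {α : Type*} {m : MeasurableSpace α}
    [m0 : MeasurableSpace α] (κ : Kernel α α)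
    (hκ : ∀ A : Set α, MeasurableSet[m0] A → Measurable[m] fun ω => κ ω A)
    {f : α → ℝ≥0∞} (hf : Measurable f) :
    Measurable[m] fun ω => ∫⁻ x, f x ∂κ ω := by
  revert f
  refine Measurable.ennreal_induction ?_ ?_ ?_
  · intro c s hs
    have heq : ∀ ω : α, ∫⁻ x, s.indicator (fun _ => c) x ∂κ ω = c * κ ω s := by
      intro ω
      rw [lintegral_indicator hs]
      simp
    simp only [heq]
    exact (hκ s hs).const_mul c
  · intro u v _ hum hvm hu hv
    have heq : ∀ ω : α, ∫⁻ x, (u + v) x ∂κ ω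
        = (∫⁻ x, u x ∂κ ω) + ∫⁻ x, v x ∂κ ω := fun ω => lintegral_add_left hum _
    simp only [heq]
    exact hu.add hv
  · intro u hum humono hu
    have heq : ∀ ω : α, ∫⁻ x, ⨆ n, u n x ∂κ ω = ⨆ n, ∫⁻ x, u n x ∂κ ω :=
      fun ω => lintegral_iSup hum humono
    simp only [iSup_apply, heq]
    exact Measurable.iSup hu

end Aux

/-- **Lemma 2.**  For a specification `{γ_Λ}`, disjoint finite `Λ, Γ` and bounded
measurable `f, g`:  `γ_{Λ∪Γ}[f γ_Λ(γ_Γ(g))] = γ_{Λ∪Γ}[g γ_Γ(γ_Λ(f))]`. -/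
theorem specification_exchange_lemma
    {d : ℕ} (hd : 0 < d) {E : Type*} [MeasurableSpace E]
    (γ : Finset (Fin d → ℤ) → Kernel (Config (Fin d → ℤ) E) (Config (Fin d → ℤ) E))
    (hspec : IsSpecification γ)
    (Λ Γ : Finset (Fin d → ℤ)) (hdisj : Disjoint Λ Γ)
    (f g : Config (Fin d → ℤ) E → ℝ≥0∞)
    (hf : Measurable f) (hg : Measurable g)
    (hfb : ∃ C : ℝ≥0, ∀ ω, f ω ≤ C) (hgb : ∃ C : ℝ≥0, ∀ ω, g ω ≤ C) :
    ∀ ω : Config (Fin d → ℤ) E,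
      ∫⁻ η, f η * (∫⁻ ζ, (∫⁻ ξ, g ξ ∂(γ Γ ζ)) ∂(γ Λ η)) ∂(γ (Λ ∪ Γ) ω)
        = ∫⁻ η, g η * (∫⁻ ζ, (∫⁻ ξ, f ξ ∂(γ Λ ζ)) ∂(γ Γ η)) ∂(γ (Λ ∪ Γ) ω) := by
  classical
  obtain ⟨hmarkov, hmeas, hproper, hcons⟩ := hspec
  -- sub-σ-algebras
  have hm : ∀ V : Finset (Fin d → ℤ), cylSigma E ((V : Set (Fin d → ℤ))ᶜ) ≤ (inferInstance :
      MeasurableSpace (Config (Fin d → ℤ) E)) := by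
    intro V
    exact Measurable.comap_le (measurable_pi_lambda _ fun i => measurable_pi_apply _)
  -- the functions F = γ_Λ f, G = γ_Γ g
  set F : Config (Fin d → ℤ) E → ℝ≥0∞ := fun η => ∫⁻ ξ, f ξ ∂γ Λ η with hFdef
  set G : Config (Fin d → ℤ) E → ℝ≥0∞ := fun η => ∫⁻ ξ, g ξ ∂γ Γ η with hGdef
  have hFm : Measurable[cylSigma E ((Λ : Set (Fin d → ℤ))ᶜ)] F :=
    measurable_lintegral_kernel (γ Λ) (fun A hA => hmeas Λ A hA) hf
  have hGm : Measurable[cylSigma E ((Γ : Set (Fin d → ℤ))ᶜ)] G :=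
    measurable_lintegral_kernel (γ Γ) (fun A hA => hmeas Γ A hA) hg
  have hFm0 : Measurable F := hFm.mono (hm Λ) le_rfl
  have hGm0 : Measurable G := hGm.mono (hm Γ) le_rfl
  -- αG = γ_Λ G  and βF = γ_Γ F
  set aG : Config (Fin d → ℤ) E → ℝ≥0∞ := fun η => ∫⁻ ζ, G ζ ∂γ Λ η with haGdef
  set bF : Config (Fin d → ℤ) E → ℝ≥0∞ := fun η => ∫⁻ ζ, F ζ ∂γ Γ η with hbFdef
  have haGm : Measurable[cylSigma E ((Λ : Set (Fin d → ℤ))ᶜ)] aG :=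
    measurable_lintegral_kernel (γ Λ) (fun A hA => hmeas Λ A hA) hGm0
  have hbFm : Measurable[cylSigma E ((Γ : Set (Fin d → ℤ))ᶜ)] bF :=
    measurable_lintegral_kernel (γ Γ) (fun A hA => hmeas Γ A hA) hFm0
  have haGm0 : Measurable aG := haGm.mono (hm Λ) le_rfl
  have hbFm0 : Measurable bF := hbFm.mono (hm Γ) le_rfl
  -- a generic one-sided computation
  have key : ∀ (V : Finset (Fin d → ℤ)) (h F' G' : Config (Fin d → ℤ) E → ℝ≥0∞),
      Measurable h →
      Measurable[cylSigma E ((V : Set (Fin d → ℤ))ᶜ)] F' →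
      Measurable[cylSigma E ((V : Set (Fin d → ℤ))ᶜ)] G' →
      (∀ η, F' η = ∫⁻ ξ, h ξ ∂γ V η) →
      (∀ η, ∫⁻ ζ, G' ζ ∂γ V η = G' η) →
      V ⊆ Λ ∪ Γ →
      ∀ ω, ∫⁻ η, h η * G' η ∂γ (Λ ∪ Γ) ω
        = ∫⁻ η, F' η * G' η ∂γ (Λ ∪ Γ) ω := by
    intro V h F' G' hh hF' hG' hF'eq hG'inv hVsub ω
    have hF'0 : Measurable F' := hF'.mono (hm V) le_rfl
    have hG'0 : Measurable G' := hG'.mono (hm V) le_rfl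
    have hcomp := hcons V (Λ ∪ Γ) hVsub
    calc ∫⁻ η, h η * G' η ∂γ (Λ ∪ Γ) ω
        = ∫⁻ η, h η * G' η ∂((γ V).comp (γ (Λ ∪ Γ))) ω := by rw [hcomp]
      _ = ∫⁻ η, ∫⁻ ζ, h ζ * G' ζ ∂γ V η ∂γ (Λ ∪ Γ) ω :=
          Kernel.lintegral_comp _ _ _ (hh.mul hG'0)
      _ = ∫⁻ η, F' η * G' η ∂γ (Λ ∪ Γ) ω := by
          refine lintegral_congr fun η => ?_
          have : ∫⁻ ζ, h ζ * G' ζ ∂γ V η = ∫⁻ ζ, G' ζ * h ζ ∂γ V η := by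
            simp_rw [mul_comm]
          rw [this, lintegral_mul_pullout (hm V) (γ V η) η
            (fun B hB => hproper V B hB η) hG' hh, hF'eq, mul_comm]
  -- aG and bF are invariant under γ_Λ, γ_Γ respectively
  have haGinv : ∀ η, ∫⁻ ζ, aG ζ ∂γ Λ η = aG η := by
    intro η
    have hcomp := hcons Λ Λ le_rfl
    calc ∫⁻ ζ, aG ζ ∂γ Λ η = ∫⁻ ζ, ∫⁻ ξ, G ξ ∂γ Λ ζ ∂γ Λ η := rfl
      _ = ∫⁻ ξ, G ξ ∂((γ Λ).comp (γ Λ)) η := (Kernel.lintegral_comp _ _ _ hGm0).symm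
      _ = aG η := by rw [hcomp]
  have hbFinv : ∀ η, ∫⁻ ζ, bF ζ ∂γ Γ η = bF η := by
    intro η
    have hcomp := hcons Γ Γ le_rfl
    calc ∫⁻ ζ, bF ζ ∂γ Γ η = ∫⁻ ζ, ∫⁻ ξ, F ξ ∂γ Γ ζ ∂γ Γ η := rfl
      _ = ∫⁻ ξ, F ξ ∂((γ Γ).comp (γ Γ)) η := (Kernel.lintegral_comp _ _ _ hFm0).symm
      _ = bF η := by rw [hcomp]
  intro ω
  -- LHS
  have hL1 : ∫⁻ η, f η * aG η ∂γ (Λ ∪ Γ) ω = ∫⁻ η, F η * aG η ∂γ (Λ ∪ Γ) ω :=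
    key Λ f F aG hf hFm haGm (fun _ => rfl) haGinv Finset.subset_union_left ω
  have hL2 : ∫⁻ η, G η * F η ∂γ (Λ ∪ Γ) ω = ∫⁻ η, aG η * F η ∂γ (Λ ∪ Γ) ω :=
    key Λ G aG F hGm0 haGm hFm (fun _ => rfl)
      (fun η => by
        have hcomp := hcons Λ Λ le_rfl
        calc ∫⁻ ζ, F ζ ∂γ Λ η = ∫⁻ ζ, ∫⁻ ξ, f ξ ∂γ Λ ζ ∂γ Λ η := rfl
          _ = ∫⁻ ξ, f ξ ∂((γ Λ).comp (γ Λ)) η := (Kernel.lintegral_comp _ _ _ hf).symm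
          _ = F η := by rw [hcomp])
      Finset.subset_union_left ω
  -- RHS
  have hR1 : ∫⁻ η, g η * bF η ∂γ (Λ ∪ Γ) ω = ∫⁻ η, G η * bF η ∂γ (Λ ∪ Γ) ω :=
    key Γ g G bF hg hGm hbFm (fun _ => rfl) hbFinv Finset.subset_union_right ω
  have hR2 : ∫⁻ η, F η * G η ∂γ (Λ ∪ Γ) ω = ∫⁻ η, bF η * G η ∂γ (Λ ∪ Γ) ω :=
    key Γ F bF G hFm0 hbFm hGm (fun _ => rfl)
      (fun η => by
        have hcomp := hcons Γ Γ le_rfl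
        calc ∫⁻ ζ, G ζ ∂γ Γ η = ∫⁻ ζ, ∫⁻ ξ, g ξ ∂γ Γ ζ ∂γ Γ η := rfl
          _ = ∫⁻ ξ, g ξ ∂((γ Γ).comp (γ Γ)) η := (Kernel.lintegral_comp _ _ _ hg).symm
          _ = G η := by rw [hcomp])
      Finset.subset_union_right ω
  have hmulcomm1 : ∫⁻ η, F η * aG η ∂γ (Λ ∪ Γ) ω
      = ∫⁻ η, aG η * F η ∂γ (Λ ∪ Γ) ω := by simp_rw [mul_comm]
  have hmulcomm2 : ∫⁻ η, G η * bF η ∂γ (Λ ∪ Γ) ω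
      = ∫⁻ η, bF η * G η ∂γ (Λ ∪ Γ) ω := by simp_rw [mul_comm]
  calc ∫⁻ η, f η * aG η ∂γ (Λ ∪ Γ) ω
      = ∫⁻ η, F η * aG η ∂γ (Λ ∪ Γ) ω := hL1
    _ = ∫⁻ η, aG η * F η ∂γ (Λ ∪ Γ) ω := hmulcomm1
    _ = ∫⁻ η, G η * F η ∂γ (Λ ∪ Γ) ω := hL2.symm
    _ = ∫⁻ η, F η * G η ∂γ (Λ ∪ Γ) ω := by simp_rw [mul_comm]
    _ = ∫⁻ η, bF η * G η ∂γ (Λ ∪ Γ) ω := hR2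
    _ = ∫⁻ η, G η * bF η ∂γ (Λ ∪ Γ) ω := hmulcomm2.symm
    _ = ∫⁻ η, g η * bF η ∂γ (Λ ∪ Γ) ω := hR1.symm
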